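/- Let R be an order in a quadratic number field K, and let I be a nonzero ideal of R. Then I is an invertible ideal of its multiplier ring R_I = {x ∈ K : xI ⊆ I}. -/

import Mathlib

open Submodule in

lemma quadRel' (K : Type*) [Field K] [CharZero K] (h2 : Module.finrank ℚ K = 2) (τ : K) :
    ∃ a b c u v w : ℤ, u * a + v * b + w * c = 1 ∧
      (a : K) * τ ^ 2 + (b : K) * τ + (c : K) = 0 := by
  haveI : FiniteDimensional ℚ K := FiniteDimensional.of_finrank_eq_succ h2
  have hnli : ¬ LinearIndependent ℚ ![(1 : K), τ, τ ^ 2] := by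
    intro h
    have := h.fintype_card_le_finrank
    simp [h2] at this
  obtain ⟨g, hg, i0, hi0⟩ := Fintype.not_linearIndependent_iff.1 hnli
  -- clear denominators
  set q0 : ℚ := g 0 with hq0
  set q1 : ℚ := g 1 with hq1
  set q2 : ℚ := g 2 with hq2
  have heq : (q0 : K) + (q1 : K) * τ + (q2 : K) * τ ^ 2 = 0 := by
    have := hg
    rw [Fin.sum_univ_three] at this
    simp only [Matrix.cons_val_zero, Matrix.cons_val_one, Matrix.head_cons,
      Matrix.cons_val_two, Matrix.tail_cons, Rat.smul_def] at this
    rw [← this]; ring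
  set A0 : ℤ := q0.num * (q1.den * q2.den) with hA0
  set A1 : ℤ := q1.num * (q0.den * q2.den) with hA1
  set A2 : ℤ := q2.num * (q0.den * q1.den) with hA2
  have hnum : ∀ q : ℚ, ((q.num : ℚ)) = q * q.den := fun q => by
    rw [← Rat.mul_den_eq_num]
  have hcast : ∀ q : ℚ, ((q.num : K)) = (q : K) * (q.den : K) := fun q => by
    have := hnum q
    calc ((q.num : K)) = (((q.num : ℚ) : K)) := by push_cast; ring
    _ = (((q * q.den : ℚ) : K)) := by rw [← hnum q]
    _ = (q : K) * (q.den : K) := by push_cast; ring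
  have heqZ : (A2 : K) * τ ^ 2 + (A1 : K) * τ + (A0 : K) = 0 := by
    have e0 : (A0 : K) = (q0 : K) * (q0.den * q1.den * q2.den : K) := by
      rw [hA0]; push_cast [hcast q0]; ring
    have e1 : (A1 : K) = (q1 : K) * (q0.den * q1.den * q2.den : K) := by
      rw [hA1]; push_cast [hcast q1]; ring
    have e2 : (A2 : K) = (q2 : K) * (q0.den * q1.den * q2.den : K) := by
      rw [hA2]; push_cast [hcast q2]; ring
    rw [e0, e1, e2]
    have := heq
    calc (q2 : K) * _ * τ ^ 2 + (q1 : K) * _ * τ + (q0:K) * _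
        = ((q0 : K) + (q1 : K) * τ + (q2 : K) * τ ^ 2) * ((q0.den : K) * q1.den * q2.den) := by
          push_cast; ring
      _ = 0 := by rw [heq, zero_mul]
  -- not all zero
  have hone : A0 ≠ 0 ∨ A1 ≠ 0 ∨ A2 ≠ 0 := by
    have hden : ∀ q : ℚ, (q.den : ℤ) ≠ 0 := fun q => by exact_mod_cast q.den_nz
    fin_cases i0
    · exact Or.inl (by simp only [hA0]; exact mul_ne_zero (Rat.num_ne_zero.2 hi0) (mul_ne_zero (hden q1) (hden q2)))
    · exact Or.inr (Or.inl (mul_ne_zero (Rat.num_ne_zero.2 hi0) (mul_ne_zero (hden q0) (hden q2))))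
    · exact Or.inr (Or.inr (mul_ne_zero (Rat.num_ne_zero.2 hi0) (mul_ne_zero (hden q0) (hden q1))))
  -- principal ideal
  set Id : Ideal ℤ := Ideal.span {A0, A1, A2} with hId
  obtain ⟨e, he⟩ : Id.IsPrincipal := inferInstance
  have hmem : ∀ z ∈ ({A0, A1, A2} : Set ℤ), e ∣ z := by
    intro z hz
    have : z ∈ Id := Ideal.subset_span hz
    rw [he, Ideal.submodule_span_eq, Ideal.mem_span_singleton] at this
    exact this
  obtain ⟨c, hc⟩ := hmem A0 (by simp)
  obtain ⟨b, hb⟩ := hmem A1 (by simp)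
  obtain ⟨a, ha⟩ := hmem A2 (by simp)
  have hgen : e ∈ Id := by rw [he]; exact Ideal.subset_span rfl
  rw [hId] at hgen
  have : ∃ u v w : ℤ, u * A0 + v * A1 + w * A2 = e := by
    rw [show ({A0, A1, A2} : Set ℤ) = insert A0 {A1, A2} from rfl] at hgen
    rw [Ideal.mem_span_insert] at hgen
    obtain ⟨u, z, hz, hzz⟩ := hgen
    rw [Ideal.mem_span_insert] at hz
    obtain ⟨v, z2, hz2, hzz2⟩ := hz
    rw [Ideal.mem_span_singleton] at hz2
    obtain ⟨w, hw⟩ := hz2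
    exact ⟨u, v, w, by rw [hzz, hzz2, hw]; ring⟩
  obtain ⟨u, v, w, huvw⟩ := this
  have hene : e ≠ 0 := by
    rintro rfl
    rcases hone with h | h | h
    · exact h (by rw [hc, zero_mul])
    · exact h (by rw [hb, zero_mul])
    · exact h (by rw [ha, zero_mul])
  refine ⟨a, b, c, w, v, u, ?_, ?_⟩
  · have h1 : e * (w * a + v * b + u * c) = u * A0 + v * A1 + w * A2 := by
      rw [hc, hb, ha]; ring
    have h2 : e * (w * a + v * b + u * c) = e * 1 := by rw [h1, huvw]; ring
    have := mul_left_cancel₀ hene h2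
    linarith
  · have heK : (e : K) ≠ 0 := Int.cast_ne_zero.2 hene
    have : (e : K) * ((a:K) * τ ^ 2 + (b:K) * τ + (c:K)) = 0 := by
      rw [← heqZ, hc, hb, ha]; push_cast; ring
    exact (mul_eq_zero.1 this).resolve_left heK

open Submodule in

lemma clearDenom {K : Type*} [Field K] [CharZero K] (s : Set K) (x : K)
    (hx : x ∈ span ℚ s) : ∃ N : ℤ, N ≠ 0 ∧ (N : K) * x ∈ span ℤ s := by
  induction hx using Submodule.span_induction with
  | mem z hz => exact ⟨1, one_ne_zero, by rw [Int.cast_one, one_mul]; exact subset_span hz⟩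
  | zero => exact ⟨1, one_ne_zero, by rw [mul_zero]; exact zero_mem _⟩
  | add y z _ _ hy hz =>
      obtain ⟨N1, hN1, h1⟩ := hy
      obtain ⟨N2, hN2, h2⟩ := hz
      refine ⟨N1 * N2, mul_ne_zero hN1 hN2, ?_⟩
      have : ((N1 * N2 : ℤ) : K) * (y + z) = N2 • ((N1 : K) * y) + N1 • ((N2 : K) * z) := by
        push_cast [zsmul_eq_mul]; ring
      rw [this]
      exact add_mem (zsmul_mem h1 _) (zsmul_mem h2 _)
  | smul q y _ hy =>
      obtain ⟨N, hN, h⟩ := hy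
      refine ⟨q.den * N, mul_ne_zero (by exact_mod_cast q.den_nz) hN, ?_⟩
      have : ((q.den * N : ℤ) : K) * (q • y) = q.num • ((N : K) * y) := by
        rw [Rat.smul_def, zsmul_eq_mul]
        have : ((q.num : K)) = (q : K) * (q.den : K) := by
          have h1 : ((q.num : ℚ)) = q * q.den := by rw [← Rat.mul_den_eq_num]
          exact_mod_cast congrArg (fun r : ℚ => (r : K)) h1
        rw [this]; push_cast; ring
      rw [this]
      exact zsmul_mem h _

open Submodule in


set_option synthInstance.maxHeartbeats 1000000 in
set_option maxHeartbeats 1000000 in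
lemma mainLem (K : Type*) [Field K] [CharZero K] (h2 : Module.finrank ℚ K = 2)
    (S : Subring K) (M : Submodule ℤ K) (α β : K) (hα : α ≠ 0)
    (hM : M = span ℤ {α, β})
    (hMS : ∀ x : K, x ∈ S ↔ ∀ m ∈ M, x * m ∈ M)
    (hden : ∀ x : K, ∃ N : ℤ, N ≠ 0 ∧ (N : K) * x ∈ S) :
    ∃ J : FractionalIdeal (nonZeroDivisors ↥S) K,
      (J : Submodule ↥S K) = span ↥S (M : Set K) ∧ IsUnit J := by
  obtain ⟨τ, hβ⟩ : ∃ t : K, β = t * α := ⟨β / α, (div_mul_cancel₀ β hα).symm⟩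
  obtain ⟨a, b, c, u, v, w, hbez, heq⟩ := quadRel' K h2 τ
  have hZS : ∀ n : ℤ, (n : K) ∈ S := by
    intro n
    rw [hMS]
    intro m hm
    rw [show (n : K) * m = n • m from (zsmul_eq_mul m n).symm]
    exact M.smul_mem n hm
  have hαM : α ∈ M := by rw [hM]; exact subset_span (Set.mem_insert _ _)
  have hβM : β ∈ M := by rw [hM]; exact subset_span (Set.mem_insert_of_mem _ rfl)
  have haτ : (a : K) * τ ∈ S := by
    rw [hMS]
    intro m hm
    rw [hM] at hm
    induction hm using Submodule.span_induction with
    | mem p hp =>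
        have hp' : p = α ∨ p = β := by simpa using hp
        rcases hp' with h | h
        · rw [h, show (a : K) * τ * α = a • β from by rw [zsmul_eq_mul, hβ]; ring]
          exact M.smul_mem a hβM
        · rw [h, show (a : K) * τ * β = (-b) • β + (-c) • α from by
            rw [zsmul_eq_mul, zsmul_eq_mul, hβ]
            push_cast
            linear_combination α * heq]
          exact add_mem (M.smul_mem _ hβM) (M.smul_mem _ hαM)
    | zero => rw [mul_zero]; exact M.zero_mem
    | add p q _ _ hp hq => rw [mul_add]; exact M.add_mem hp hq
    | smul n p _ hp =>
        rw [show (a:K) * τ * (n • p) = n • ((a:K) * τ * p) from by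
          rw [zsmul_eq_mul, zsmul_eq_mul]; ring]
        exact M.smul_mem n hp
  obtain ⟨x, y, hprod_αx, hprod_βx, hprod_αy, hprod_βy⟩ :
      ∃ x y : K, α * x = (a : K) ∧ β * x = (a : K) * τ ∧
        α * y = (b : K) + (a : K) * τ ∧ β * y = -(c : K) := by
    refine ⟨(a : K) / α, ((b : K) + (a : K) * τ) / α, by field_simp, ?_, by field_simp, ?_⟩
    · rw [hβ]; field_simp
    · rw [hβ]; field_simp; linear_combination heq
  have fracHelper : ∀ s : Set K, (∃ N : ℤ, N ≠ 0 ∧ ∀ z ∈ s, (N : K) * z ∈ S) →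
      IsFractional (nonZeroDivisors ↥S) (span ↥S s) := by
    rintro s ⟨N, hN, h⟩
    refine ⟨⟨(N : K), hZS N⟩, mem_nonZeroDivisors_of_ne_zero ?_, ?_⟩
    · intro hc
      apply hN
      have : ((N : K)) = 0 := congrArg Subtype.val hc
      exact_mod_cast this
    · intro z hz
      have key : (N : K) * z ∈ S := by
        induction hz using Submodule.span_induction with
        | mem p hp => exact h p hp
        | zero => rw [mul_zero]; exact S.zero_mem
        | add p q _ _ hp hq => rw [mul_add]; exact S.add_mem hp hq
        | smul t p _ hp =>
            rw [show (N : K) * (t • p) = (t : K) * ((N : K) * p) from by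
              rw [show t • p = (t : K) * p from rfl]; ring]
            exact S.mul_mem t.2 hp
      exact ⟨⟨_, key⟩, rfl⟩
  have hfracJ : IsFractional (nonZeroDivisors ↥S) (span ↥S (M : Set K)) := by
    apply fracHelper
    obtain ⟨N1, hN1, hNα⟩ := hden α
    obtain ⟨N2, hN2, hNβ⟩ := hden β
    refine ⟨N1 * N2, mul_ne_zero hN1 hN2, ?_⟩
    intro z hz
    rw [SetLike.mem_coe, hM] at hz
    induction hz using Submodule.span_induction with
    | mem p hp =>
        have hp' : p = α ∨ p = β := by simpa using hp
        rcases hp' with h | h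
        · rw [h, show ((N1 * N2 : ℤ) : K) * α = (N2 : K) * ((N1 : K) * α) from by push_cast; ring]
          exact S.mul_mem (hZS N2) hNα
        · rw [h, show ((N1 * N2 : ℤ) : K) * β = (N1 : K) * ((N2 : K) * β) from by push_cast; ring]
          exact S.mul_mem (hZS N1) hNβ
    | zero => rw [mul_zero]; exact S.zero_mem
    | add p q _ _ hp hq => rw [mul_add]; exact S.add_mem hp hq
    | smul n p _ hp =>
        rw [show ((N1 * N2 : ℤ) : K) * (n • p) = n • (((N1 * N2 : ℤ) : K) * p) from by
          rw [zsmul_eq_mul, zsmul_eq_mul]; ring]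
        exact AddSubgroup.zsmul_mem S.toAddSubgroup hp n
  have hfracJ' : IsFractional (nonZeroDivisors ↥S) (span ↥S ({x, y} : Set K)) := by
    apply fracHelper
    obtain ⟨N1, hN1, hNx⟩ := hden x
    obtain ⟨N2, hN2, hNy⟩ := hden y
    refine ⟨N1 * N2, mul_ne_zero hN1 hN2, ?_⟩
    rintro z (rfl | rfl)
    · rw [show ((N1 * N2 : ℤ) : K) * z = (N2 : K) * ((N1 : K) * z) from by push_cast; ring]
      exact S.mul_mem (hZS N2) hNx
    · rw [show ((N1 * N2 : ℤ) : K) * z = (N1 : K) * ((N2 : K) * z) from by push_cast; ring]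
      exact S.mul_mem (hZS N1) hNy
  refine ⟨⟨span ↥S (M : Set K), hfracJ⟩, rfl, ?_⟩
  set J : FractionalIdeal (nonZeroDivisors ↥S) K := ⟨span ↥S (M : Set K), hfracJ⟩ with hJ
  set J' : FractionalIdeal (nonZeroDivisors ↥S) K := ⟨span ↥S ({x, y} : Set K), hfracJ'⟩ with hJ'
  have hαJ : α ∈ span ↥S (M : Set K) := subset_span hαM
  have hβJ : β ∈ span ↥S (M : Set K) := subset_span hβM
  have hxJ' : x ∈ span ↥S ({x, y} : Set K) := subset_span (Set.mem_insert _ _)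
  have hyJ' : y ∈ span ↥S ({x, y} : Set K) := subset_span (Set.mem_insert_of_mem _ rfl)
  have key : ∀ m ∈ M, ∀ z ∈ ({x, y} : Set K), m * z ∈ S := by
    intro m hm
    rw [hM] at hm
    induction hm using Submodule.span_induction with
    | mem p hp =>
        have hp' : p = α ∨ p = β := by simpa using hp
        intro z hz
        have hz' : z = x ∨ z = y := by simpa using hz
        rcases hp' with h | h <;> rcases hz' with h2 | h2 <;> rw [h, h2]
        · rw [hprod_αx]; exact hZS a
        · rw [hprod_αy]; exact S.add_mem (hZS b) haτ
        · rw [hprod_βx]; exact haτ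
        · rw [hprod_βy]
          rw [show -(c:K) = ((-c : ℤ) : K) from by push_cast; ring]
          exact hZS (-c)
    | zero => intro z hz; rw [zero_mul]; exact S.zero_mem
    | add p q _ _ hp hq =>
        intro z hz
        rw [add_mul]; exact S.add_mem (hp z hz) (hq z hz)
    | smul n p _ hp =>
        intro z hz
        rw [show (n • p) * z = n • (p * z) from by rw [zsmul_eq_mul, zsmul_eq_mul]; ring]
        exact AddSubgroup.zsmul_mem S.toAddSubgroup (hp z hz) n
  have hmul : J * J' = 1 := by
    apply FractionalIdeal.coeToSubmodule_injective
    show ((J * J' : FractionalIdeal _ K) : Submodule ↥S K)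
        = ((1 : FractionalIdeal (nonZeroDivisors ↥S) K) : Submodule ↥S K)
    rw [FractionalIdeal.coe_mul, FractionalIdeal.coe_one]
    have hJc : (J : Submodule ↥S K) = span ↥S (M : Set K) := rfl
    have hJ'c : (J' : Submodule ↥S K) = span ↥S ({x, y} : Set K) := rfl
    rw [hJc, hJ'c]
    apply le_antisymm
    · apply Submodule.mul_le.2
      intro m hm n hn
      induction hn using Submodule.span_induction with
      | mem z hz =>
          induction hm using Submodule.span_induction with
          | mem p hp => exact Submodule.mem_one.2 ⟨⟨_, key p hp z hz⟩, rfl⟩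
          | zero => rw [zero_mul]; exact Submodule.zero_mem _
          | add p q _ _ hp hq => rw [add_mul]; exact Submodule.add_mem _ hp hq
          | smul t p _ hp =>
              rw [show (t • p) * z = t • (p * z) from by
                rw [show ∀ r : K, t • r = (t:K) * r from fun _ => rfl,
                    show ∀ r : K, t • r = (t:K) * r from fun _ => rfl]; ring]
              exact Submodule.smul_mem _ t hp
      | zero => rw [mul_zero]; exact Submodule.zero_mem _
      | add p q _ _ hp hq => rw [mul_add]; exact Submodule.add_mem _ hp hq
      | smul t p _ hp =>
          rw [show m * (t • p) = t • (m * p) from by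
            rw [show ∀ r : K, t • r = (t:K) * r from fun _ => rfl,
                show ∀ r : K, t • r = (t:K) * r from fun _ => rfl]; ring]
          exact Submodule.smul_mem _ t hp
    · rw [Submodule.one_eq_span, span_le, Set.singleton_subset_iff]
      have haP : (a : K) ∈ span ↥S (M : Set K) * span ↥S ({x, y} : Set K) := by
        have := Submodule.mul_mem_mul hαJ hxJ'
        rwa [hprod_αx] at this
      have haτP : (a : K) * τ ∈ span ↥S (M : Set K) * span ↥S ({x, y} : Set K) := by
        have := Submodule.mul_mem_mul hβJ hxJ'
        rwa [hprod_βx] at this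
      have hbP : (b : K) ∈ span ↥S (M : Set K) * span ↥S ({x, y} : Set K) := by
        have h1 := Submodule.mul_mem_mul hαJ hyJ'
        rw [hprod_αy] at h1
        have := Submodule.sub_mem _ h1 haτP
        simpa using this
      have hcP : (c : K) ∈ span ↥S (M : Set K) * span ↥S ({x, y} : Set K) := by
        have h1 := Submodule.neg_mem _ (Submodule.mul_mem_mul hβJ hyJ')
        rwa [hprod_βy, neg_neg] at h1
      have h1 : (1 : K) = u • (a : K) + v • (b : K) + w • (c : K) := by
        rw [zsmul_eq_mul, zsmul_eq_mul, zsmul_eq_mul]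
        have h2 : ((u * a + v * b + w * c : ℤ) : K) = 1 := by rw [hbez]; exact Int.cast_one
        push_cast at h2
        linear_combination -h2
      rw [SetLike.mem_coe, h1]
      exact Submodule.add_mem _ (Submodule.add_mem _ (zsmul_mem haP u)
        (zsmul_mem hbP v)) (zsmul_mem hcP w)
  exact IsUnit.of_mul_eq_one J' hmul

open Submodule in
set_option synthInstance.maxHeartbeats 1000000 in
set_option maxHeartbeats 1000000 in

/-- Let `R` be an order in a quadratic number field `K` and `I` a nonzero ideal of `R`.
Then `I` is an invertible (fractional) ideal of its multiplier ring
`S = {x ∈ K : xI ⊆ I}`. -/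
theorem stmt7 (K : Type*) [Field K] [NumberField K] (h2 : Module.finrank ℚ K = 2)
    (R : Subring K) (hfree : Module.Free ℤ ↥R) (hrank : Module.finrank ℤ ↥R = 2)
    (I : Ideal ↥R) (hI : I ≠ ⊥)
    (S : Subring K)
    (hS : ∀ x : K, x ∈ S ↔ ∀ i ∈ I, ∃ j ∈ I, x * (i : K) = (j : K)) :
    ∃ J : FractionalIdeal (nonZeroDivisors ↥S) K,
      (J : Submodule ↥S K) = Submodule.span ↥S ((↑) '' (I : Set ↥R)) ∧ IsUnit J := by
  haveI : Module.Finite ℤ ↥R := Module.finite_of_finrank_eq_succ hrank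
  let bR : Module.Basis (Fin 2) ℤ ↥R := Module.finBasisOfFinrankEq ℤ ↥R hrank
  let f : ↥R →ₗ[ℤ] K := (R.subtype : ↥R →+* K).toAddMonoidHom.toIntLinearMap
  have hfinj : Function.Injective f := Subtype.val_injective
  let I' : Submodule ℤ ↥R := I.restrictScalars ℤ
  obtain ⟨n, bI⟩ := Submodule.basisOfPid bR I'
  let g : ↥I' →ₗ[ℤ] K := f.comp I'.subtype
  have hginj : Function.Injective g := hfinj.comp Subtype.val_injective
  let M : Submodule ℤ K := LinearMap.range g
  have hset : (M : Set K) = (↑) '' (I : Set ↥R) := by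
    ext z
    constructor
    · rintro ⟨⟨i, hi⟩, rfl⟩; exact ⟨i, hi, rfl⟩
    · rintro ⟨i, hi, rfl⟩; exact ⟨⟨i, hi⟩, rfl⟩
  have hMS : ∀ x : K, x ∈ S ↔ ∀ m ∈ M, x * m ∈ M := by
    intro x
    rw [hS]
    constructor
    · rintro h m ⟨⟨i, hi⟩, rfl⟩
      obtain ⟨j, hj, hxj⟩ := h i hi
      exact ⟨⟨j, hj⟩, hxj.symm⟩
    · intro h i hi
      obtain ⟨⟨j, hj⟩, hj2⟩ := h (i : K) ⟨⟨i, hi⟩, rfl⟩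
      exact ⟨j, hj, hj2.symm⟩
  have hMspan : M = span ℤ (Set.range fun i : Fin n => g (bI i)) := by
    have h0 : M = Submodule.map g ⊤ := (Submodule.map_top g).symm
    rw [h0, ← bI.span_eq, Submodule.map_span, ← Set.range_comp]
    rfl
  have hn : n ≤ 2 := by
    have h1 : Module.finrank ℤ ↥I' = n := by
      rw [Module.finrank_eq_card_basis bI, Fintype.card_fin]
    have h2 : Module.finrank ℤ ↥I' ≤ Module.finrank ℤ ↥R := I'.finrank_le
    omega
  have hRS : ∀ r : ↥R, (r : K) ∈ S := by
    intro r
    rw [hS]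
    intro i hi
    exact ⟨r * i, I.mul_mem_left r hi, rfl⟩
  have hspan : span ℚ ((S : Set K)) = ⊤ := by
    have hli : LinearIndependent ℚ (fun i : Fin 2 => f (bR i)) := by
      rw [← LinearIndependent.iff_fractionRing (R := ℤ) (K := ℚ)]
      exact bR.linearIndependent.map' f (LinearMap.ker_eq_bot.2 hfinj)
    have h1 : span ℚ (Set.range fun i : Fin 2 => f (bR i)) = ⊤ := by
      apply Submodule.eq_top_of_finrank_eq
      rw [finrank_span_eq_card hli]
      simp [h2]
    refine top_unique ?_
    rw [← h1]
    apply span_le.2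
    rintro z ⟨i, rfl⟩
    exact subset_span (hRS (bR i))
  have hden : ∀ x : K, ∃ N : ℤ, N ≠ 0 ∧ (N : K) * x ∈ S := by
    intro x
    have hx : x ∈ span ℚ ((S : Set K)) := by rw [hspan]; exact mem_top
    obtain ⟨N, hN, hNx⟩ := clearDenom _ x hx
    refine ⟨N, hN, ?_⟩
    have hle : span ℤ ((S : Set K)) ≤ S.toAddSubgroup.toIntSubmodule :=
      span_le.2 (fun z hz => hz)
    exact hle hNx
  -- case analysis on n
  interval_cases n
  · -- n = 0 : I = ⊥, contradiction
    exfalso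
    apply hI
    apply (Submodule.eq_bot_iff I).2
    intro i hi
    have hz : bI.repr ⟨i, hi⟩ = 0 := by
      ext a
      exact absurd a.2 (by omega)
    have : (⟨i, hi⟩ : ↥I') = 0 := by
      have := congrArg bI.repr.symm hz
      rwa [bI.repr.symm_apply_apply, map_zero] at this
    exact congrArg Subtype.val this
  · -- n = 1
    set α : K := g (bI 0) with hαdef
    have hα : α ≠ 0 := fun h =>
      bI.ne_zero 0 (hginj (h.trans (map_zero g).symm))
    have hM : M = span ℤ {α, (0 : K)} := by
      rw [hMspan]
      have : (Set.range fun i : Fin 1 => g (bI i)) = {α} := Set.range_unique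
      rw [this]
      apply le_antisymm
      · exact span_mono (Set.singleton_subset_iff.2 (Set.mem_insert _ _))
      · apply span_le.2
        rintro z (rfl | rfl)
        · exact subset_span rfl
        · exact zero_mem _
    obtain ⟨J, hJ1, hJ2⟩ := mainLem K h2 S M α 0 hα hM hMS hden
    exact ⟨J, by rw [hJ1, hset], hJ2⟩
  · -- n = 2
    set α : K := g (bI 0) with hαdef
    set β : K := g (bI 1) with hβdef
    have hα : α ≠ 0 := fun h =>
      bI.ne_zero 0 (hginj (h.trans (map_zero g).symm))
    have hM : M = span ℤ {α, β} := by
      rw [hMspan]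
      congr 1
      ext z
      constructor
      · rintro ⟨i, rfl⟩
        fin_cases i
        · exact Set.mem_insert _ _
        · exact Set.mem_insert_of_mem _ rfl
      · rintro (rfl | rfl)
        · exact ⟨0, rfl⟩
        · exact ⟨1, rfl⟩
    obtain ⟨J, hJ1, hJ2⟩ := mainLem K h2 S M α β hα hM hMS hden
    exact ⟨J, by rw [hJ1, hset], hJ2⟩
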